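/- arXiv:1703.00830 — 9 statements merged into one kernel-verified Lean document; each statement's English description precedes it below -/
import Mathlib

section
/- Let V be a finite metric space, V_i ⊆ V, and p ≥ 1. If OPT(V_i, S) denotes the minimum over all sets C ⊆ S with |C| ≤ k of (∑_{v ∈ V_i} min_{c ∈ C} d(v,c)^p), then OPT(V_i, V_i) ≤ 2^p · OPT(V_i, V). That is, restricting candidate centers to lie in V_i rather than all of V increases the p-th power of the k-clustering cost by at most a factor 2^p. -/
open Finset

private lemma set_finite_aux {V : Type*} [MetricSpace V] [Fintype V]
    (Vi : Finset V) (p : ℝ) (S : Set ℝ)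
    (hS : ∀ x ∈ S, ∃ (C : Finset V) (hC : C.Nonempty),
      x = ∑ v ∈ Vi, C.inf' hC (fun c => dist v c ^ p)) : S.Finite := by
  classical
  apply Set.Finite.subset (Set.finite_range
    (fun C : {C : Finset V // C.Nonempty} =>
      ∑ v ∈ Vi, C.1.inf' C.2 (fun c => dist v c ^ p)))
  intro x hx
  obtain ⟨C, hC, hxeq⟩ := hS x hx
  exact ⟨⟨C, hC⟩, hxeq.symm⟩

/-- Restricting candidate centers of a `k`-clustering of `Vi` to lie in `Vi`
rather than in all of `V` increases the `p`-th power of the optimal cost by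
at most a factor `2^p`:  `OPT(Vi, Vi) ≤ 2^p · OPT(Vi, V)`. -/
theorem opt_local_centers_le {V : Type*} [MetricSpace V] [Fintype V]
    (Vi : Finset V) (hVi : Vi.Nonempty) (k : ℕ) (hk : 1 ≤ k) (p : ℝ) (hp : 1 ≤ p) :
    sInf {x : ℝ | ∃ (C : Finset V) (hC : C.Nonempty), C ⊆ Vi ∧ C.card ≤ k ∧
        x = ∑ v ∈ Vi, C.inf' hC (fun c => dist v c ^ p)} ≤
      (2 : ℝ) ^ p *
        sInf {x : ℝ | ∃ (C : Finset V) (hC : C.Nonempty), C.card ≤ k ∧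
          x = ∑ v ∈ Vi, C.inf' hC (fun c => dist v c ^ p)} := by
  classical
  set S1 : Set ℝ := {x : ℝ | ∃ (C : Finset V) (hC : C.Nonempty), C ⊆ Vi ∧ C.card ≤ k ∧
        x = ∑ v ∈ Vi, C.inf' hC (fun c => dist v c ^ p)} with hS1def
  set S2 : Set ℝ := {x : ℝ | ∃ (C : Finset V) (hC : C.Nonempty), C.card ≤ k ∧
          x = ∑ v ∈ Vi, C.inf' hC (fun c => dist v c ^ p)} with hS2def
  have hS1fin : S1.Finite := set_finite_aux Vi p S1 (by
    rintro x ⟨C, hC, _, _, hx⟩; exact ⟨C, hC, hx⟩)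
  have hS2fin : S2.Finite := set_finite_aux Vi p S2 (by
    rintro x ⟨C, hC, _, hx⟩; exact ⟨C, hC, hx⟩)
  obtain ⟨v0, hv0⟩ := id hVi
  have hS2ne : S2.Nonempty := by
    refine ⟨_, ⟨{v0}, singleton_nonempty v0, ?_, rfl⟩⟩
    simpa using hk
  have hmem : sInf S2 ∈ S2 := hS2ne.csInf_mem hS2fin
  obtain ⟨C, hC, hCk, hCeq⟩ := hmem
  -- nearest point map into Vi
  have hnear : ∀ c : V, ∃ c' ∈ Vi, ∀ w ∈ Vi, dist c c' ≤ dist c w := fun c =>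
    Vi.exists_min_image (fun x => dist c x) hVi
  choose f hfmem hfmin using hnear
  set C' : Finset V := C.image f with hC'def
  have hC'ne : C'.Nonempty := hC.image f
  have hC'sub : C' ⊆ Vi := by
    intro x hx
    obtain ⟨c, _, rfl⟩ := Finset.mem_image.mp hx
    exact hfmem c
  have hC'card : C'.card ≤ k := le_trans (Finset.card_image_le) hCk
  have h2p : (0:ℝ) ≤ (2:ℝ) ^ p := Real.rpow_nonneg (by norm_num) p
  have key : ∑ v ∈ Vi, C'.inf' hC'ne (fun c => dist v c ^ p)
      ≤ (2:ℝ) ^ p * sInf S2 := by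
    rw [hCeq, Finset.mul_sum]
    apply Finset.sum_le_sum
    intro v hv
    obtain ⟨c, hcC, hceq⟩ := C.exists_mem_eq_inf' hC (fun c => dist v c ^ p)
    rw [hceq]
    have hfc : f c ∈ C' := Finset.mem_image_of_mem f hcC
    refine le_trans (Finset.inf'_le _ hfc) ?_
    have hd : dist v (f c) ≤ 2 * dist v c := by
      have h1 : dist v (f c) ≤ dist v c + dist c (f c) := dist_triangle _ _ _
      have h2 : dist c (f c) ≤ dist c v := hfmin c v hv
      rw [dist_comm c v] at h2
      linarith
    calc dist v (f c) ^ p ≤ (2 * dist v c) ^ p :=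
          Real.rpow_le_rpow dist_nonneg hd (by linarith)
      _ = (2:ℝ) ^ p * dist v c ^ p :=
          Real.mul_rpow (by norm_num) dist_nonneg
  have hmemS1 : (∑ v ∈ Vi, C'.inf' hC'ne (fun c => dist v c ^ p)) ∈ S1 :=
    ⟨C', hC'ne, hC'sub, hC'card, rfl⟩
  exact le_trans (csInf_le hS1fin.bddBelow hmemS1) key
end

section
/- Let V be a finite metric space partitioned into V_1, …, V_m, and let 1 ≤ p < ∞. Then ∑_{i=1}^m OPT_{k+z}(V_i)^p ≤ 2^p · OPT_{k,z}(V)^p, where OPT_{k+z}(V_i) is the optimal (k+z)-median-type ℓ_p cost of V_i with centers from V_i, and OPT_{k,z}(V) is the optimal k-clustering ℓ_p cost of V with z outliers removed. -/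
open Finset

/-!
Fix a feasible global solution: centers `C` with `|C| ≤ k` and outliers `Z` with `|Z| ≤ z`.
On a part `S = V_i`, replace every center `c ∈ C` by a point `π c ∈ S` nearest to `c`, and
open every outlier lying in `S` as a center of its own. This uses at most `k + z` centers
from `S`. Outliers now cost nothing, and for any other `v ∈ S` with nearest global center `c`,
`d(v, π c) ≤ d(v, c) + d(c, π c) ≤ 2 d(v, c)` because `v` is itself a candidate for `π c`.
Summing over the parts, which partition `V`, gives the factor `2^p`.
-/

lemma dist_le_two_mul_of_dist_le {X : Type*} [PseudoMetricSpace X] {v w c : X}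
    (h : dist w c ≤ dist v c) : dist v w ≤ 2 * dist v c := by
  linarith [dist_triangle v c w, dist_comm c w]

lemma dist_rpow_le_two_rpow_mul_of_dist_le {X : Type*} [PseudoMetricSpace X] {v w c : X}
    {p : ℝ} (hp : 0 ≤ p) (h : dist w c ≤ dist v c) :
    dist v w ^ p ≤ 2 ^ p * dist v c ^ p := by
  rw [← Real.mul_rpow zero_le_two dist_nonneg]
  exact Real.rpow_le_rpow dist_nonneg (dist_le_two_mul_of_dist_le h) hp

lemma Finset.sum_sum_sdiff_of_partition {ι α M : Type*} [Fintype ι] [Fintype α] [DecidableEq α]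
    [AddCommMonoid M] (P : ι → Finset α) (hdisj : ∀ i j, i ≠ j → Disjoint (P i) (P j))
    (hcover : ∀ a, ∃ i, a ∈ P i) (Z : Finset α) (f : α → M) :
    ∑ i, ∑ a ∈ P i \ Z, f a = ∑ a ∈ univ \ Z, f a := by
  have hunion : univ.biUnion (fun i => P i \ Z) = univ \ Z := by
    ext a
    simpa using fun _ => hcover a
  rw [← sum_biUnion, hunion]
  exact fun i _ j _ hij => (hdisj i j hij).mono sdiff_subset sdiff_subset

section Clustering

variable {V : Type*} [MetricSpace V]

/-- Its infimum is `OPT_n(S)^p`. -/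
def clusteringCosts (S : Finset V) (n : ℕ) (p : ℝ) : Set ℝ :=
  {x | ∃ (C : Finset V) (hC : C.Nonempty), C ⊆ S ∧ C.card ≤ n ∧
    x = ∑ v ∈ S, C.inf' hC (fun c => dist v c ^ p)}

lemma clusteringCosts_empty (n : ℕ) (p : ℝ) : clusteringCosts (∅ : Finset V) n p = ∅ := by
  ext x
  simp [clusteringCosts]

lemma clusteringCosts_bddBelow (S : Finset V) (n : ℕ) (p : ℝ) :
    BddBelow (clusteringCosts S n p) := by
  refine ⟨0, ?_⟩
  rintro _ ⟨C, hC, -, -, rfl⟩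
  exact sum_nonneg fun v _ => le_inf' hC _ fun c _ => Real.rpow_nonneg dist_nonneg p

lemma inf'_dist_rpow_eq_zero_of_mem {C : Finset V} (hC : C.Nonempty) {v : V} (hv : v ∈ C)
    {p : ℝ} (hp : p ≠ 0) : C.inf' hC (fun c => dist v c ^ p) = 0 := by
  refine le_antisymm ?_ (le_inf' hC _ fun c _ => Real.rpow_nonneg dist_nonneg p)
  exact (inf'_le _ hv).trans_eq (by simp [Real.zero_rpow hp])

variable [DecidableEq V]

variable (V) in
/-- Its infimum is `OPT_{k,z}(V)^p`. -/
def outlierClusteringCosts [Fintype V] (k z : ℕ) (p : ℝ) : Set ℝ :=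
  {x | ∃ (C : Finset V) (hC : C.Nonempty) (Z : Finset V), C.card ≤ k ∧ Z.card ≤ z ∧
    x = ∑ v ∈ univ \ Z, C.inf' hC (fun c => dist v c ^ p)}

lemma exists_centers_subset_cost_le {S C : Finset V} (hS : S.Nonempty) (hC : C.Nonempty)
    (Z : Finset V) {p : ℝ} (hp : 0 < p) :
    ∃ (C' : Finset V) (hC' : C'.Nonempty), C' ⊆ S ∧ C'.card ≤ C.card + Z.card ∧
      ∑ v ∈ S, C'.inf' hC' (fun c => dist v c ^ p) ≤
        2 ^ p * ∑ v ∈ S \ Z, C.inf' hC (fun c => dist v c ^ p) := by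
  choose π hπS hπmin using fun c => S.exists_min_image (fun w => dist w c) hS
  set C' := C.image π ∪ (S ∩ Z)
  have hC' : C'.Nonempty := (hC.image π).mono subset_union_left
  refine ⟨C', hC', ?_, ?_, ?_⟩
  · exact union_subset (image_subset_iff.2 fun c _ => hπS c) inter_subset_left
  · exact (card_union_le _ _).trans (add_le_add card_image_le (card_le_card inter_subset_right))
  have houtliers : ∑ v ∈ S ∩ Z, C'.inf' hC' (fun c => dist v c ^ p) = 0 :=
    sum_eq_zero fun v hv => inf'_dist_rpow_eq_zero_of_mem _ (mem_union_right _ hv) hp.ne'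
  rw [← sum_sdiff inter_subset_left, sdiff_inter_self_left, houtliers, add_zero, mul_sum]
  refine sum_le_sum fun v hv => ?_
  obtain ⟨c, hc, hceq⟩ := C.exists_mem_eq_inf' hC (fun c => dist v c ^ p)
  rw [hceq]
  exact (inf'_le _ (mem_union_left _ (mem_image_of_mem π hc))).trans
    (dist_rpow_le_two_rpow_mul_of_dist_le hp.le (hπmin c v (mem_sdiff.1 hv).1))

lemma sInf_clusteringCosts_le {S C Z : Finset V} (hC : C.Nonempty) {k z : ℕ}
    (hCk : C.card ≤ k) (hZz : Z.card ≤ z) {p : ℝ} (hp : 0 < p) :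
    sInf (clusteringCosts S (k + z) p) ≤
      2 ^ p * ∑ v ∈ S \ Z, C.inf' hC (fun c => dist v c ^ p) := by
  rcases S.eq_empty_or_nonempty with rfl | hS
  · simp [clusteringCosts_empty]
  obtain ⟨C', hC', hC'S, hC'card, hcost⟩ := exists_centers_subset_cost_le hS hC Z hp
  exact (csInf_le (clusteringCosts_bddBelow S _ p)
    ⟨C', hC', hC'S, hC'card.trans (by omega), rfl⟩).trans hcost

end Clustering

theorem sum_local_opt_le_global_outliers_general {V : Type*} [MetricSpace V] [Fintype V] [DecidableEq V]
    (m k z : ℕ) (hk : 1 ≤ k)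
    (P : Fin m → Finset V)
    (hdisj : ∀ i j, i ≠ j → Disjoint (P i) (P j))
    (hcover : ∀ v : V, ∃ i, v ∈ P i)
    (p : ℝ) (hp : 1 ≤ p) :
    ∑ i, sInf {x : ℝ | ∃ (C : Finset V) (hC : C.Nonempty), C ⊆ P i ∧ C.card ≤ k + z ∧
        x = ∑ v ∈ P i, C.inf' hC (fun c => dist v c ^ p)} ≤
      (2 : ℝ) ^ p *
        sInf {x : ℝ | ∃ (C : Finset V) (hC : C.Nonempty) (Z : Finset V),
          C.card ≤ k ∧ Z.card ≤ z ∧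
          x = ∑ v ∈ Finset.univ \ Z, C.inf' hC (fun c => dist v c ^ p)} := by
  change ∑ i, sInf (clusteringCosts (P i) (k + z) p) ≤
    2 ^ p * sInf (outlierClusteringCosts V k z p)
  rcases isEmpty_or_nonempty V with hV | ⟨⟨v₀⟩⟩
  · simp [Subsingleton.elim _ (∅ : Finset V), clusteringCosts_empty, outlierClusteringCosts]
  have h2p : (0 : ℝ) < 2 ^ p := Real.rpow_pos_of_pos two_pos p
  have hfeasible : (outlierClusteringCosts V k z p).Nonempty :=
    ⟨_, {v₀}, singleton_nonempty v₀, ∅, by simpa using hk, z.zero_le, rfl⟩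
  rw [← div_le_iff₀' h2p]
  refine le_csInf hfeasible ?_
  rintro _ ⟨C, hC, Z, hCk, hZz, rfl⟩
  rw [div_le_iff₀' h2p, ← sum_sum_sdiff_of_partition P hdisj hcover, mul_sum]
  exact sum_le_sum fun i _ => sInf_clusteringCosts_le hC hCk hZz (by linarith)

/-- For a partition `V_1, …, V_m` of a finite metric space `V` and `p ≥ 1`:
`∑_{i=1}^m OPT_{k+z}(V_i)^p ≤ 2^p · OPT_{k,z}(V)^p`, where `OPT_{k+z}(V_i)^p`
is the optimal (k+z)-clustering ℓ_p cost (p-th powers summed) of `V_i` with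
centers from `V_i`, and `OPT_{k,z}(V)^p` is the optimal k-clustering ℓ_p cost
of `V` with at most `z` outliers removed. -/
theorem sum_local_opt_le_global_outliers {V : Type*} [MetricSpace V] [Fintype V] [DecidableEq V]
    (m k z : ℕ) (hk : 1 ≤ k)
    (P : Fin m → Finset V)
    (hdisj : ∀ i j, i ≠ j → Disjoint (P i) (P j))
    (hcover : ∀ v : V, ∃ i, v ∈ P i)
    (hne : ∀ i, (P i).Nonempty)
    (p : ℝ) (hp : 1 ≤ p) :
    ∑ i, sInf {x : ℝ | ∃ (C : Finset V) (hC : C.Nonempty), C ⊆ P i ∧ C.card ≤ k + z ∧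
        x = ∑ v ∈ P i, C.inf' hC (fun c => dist v c ^ p)} ≤
      (2 : ℝ) ^ p *
        sInf {x : ℝ | ∃ (C : Finset V) (hC : C.Nonempty) (Z : Finset V),
          C.card ≤ k ∧ Z.card ≤ z ∧
          x = ∑ v ∈ Finset.univ \ Z, C.inf' hC (fun c => dist v c ^ p)} :=
  sum_local_opt_le_global_outliers_general m k z hk P hdisj hcover p hp
end

section
/- For a partition V_1, …, V_m of a finite metric space V, max_{i=1}^m OPT_{k+z}(V_i) ≤ 2 · OPT_{k,z}(V) for the k-center objective, where OPT_{k+z}(V_i) is the optimal (k+z)-center cost of V_i with centers from V_i and OPT_{k,z}(V) is the optimal k-center cost of V with z outliers. -/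
open Finset

/-- For a partition `V_1, …, V_m` of a finite metric space `V` (k-center objective):
`max_i OPT_{k+z}(V_i) ≤ 2 · OPT_{k,z}(V)`, where `OPT_{k+z}(V_i)` is the optimal
(k+z)-center cost of `V_i` with centers from `V_i`, and `OPT_{k,z}(V)` is the optimal
k-center cost of `V` with at most `z` outliers. (Stated as the bound for every `i`.) -/
theorem max_local_kcenter_le_global_outliers {V : Type*} [MetricSpace V] [Fintype V] [DecidableEq V]
    (m k z : ℕ) (hk : 1 ≤ k) (hz : z < Fintype.card V)
    (P : Fin m → Finset V)
    (hdisj : ∀ i j, i ≠ j → Disjoint (P i) (P j))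
    (hcover : ∀ v : V, ∃ i, v ∈ P i)
    (hne : ∀ i, (P i).Nonempty) :
    ∀ i : Fin m,
      sInf {x : ℝ | ∃ (C : Finset V) (hC : C.Nonempty), C ⊆ P i ∧ C.card ≤ k + z ∧
          x = (P i).sup' (hne i) (fun v => C.inf' hC (fun c => dist v c))} ≤
        2 * sInf {x : ℝ | ∃ (C : Finset V) (hC : C.Nonempty) (Z : Finset V)
            (hZne : (Finset.univ \ Z).Nonempty), C.card ≤ k ∧ Z.card ≤ z ∧
            x = (Finset.univ \ Z).sup' hZne (fun v => C.inf' hC (fun c => dist v c))} := by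
  classical
  intro i
  have hVne : Nonempty V := Fintype.card_pos_iff.mp (lt_of_le_of_lt (Nat.zero_le z) hz)
  set Sl := {x : ℝ | ∃ (C : Finset V) (hC : C.Nonempty), C ⊆ P i ∧ C.card ≤ k + z ∧
      x = (P i).sup' (hne i) (fun v => C.inf' hC (fun c => dist v c))} with hSl
  set Sg := {x : ℝ | ∃ (C : Finset V) (hC : C.Nonempty) (Z : Finset V)
      (hZne : (Finset.univ \ Z).Nonempty), C.card ≤ k ∧ Z.card ≤ z ∧
      x = (Finset.univ \ Z).sup' hZne (fun v => C.inf' hC (fun c => dist v c))} with hSg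
  have hbdd : BddBelow Sl := by
    refine ⟨0, ?_⟩
    rintro x ⟨C, hC, -, -, rfl⟩
    obtain ⟨v, hv⟩ := hne i
    exact le_trans (Finset.le_inf' hC _ fun c _ => dist_nonneg)
      (Finset.le_sup' (fun v => C.inf' hC fun c => dist v c) hv)
  have hSgne : Sg.Nonempty := by
    obtain ⟨v0⟩ := hVne
    have hZne : ((Finset.univ : Finset V) \ ∅).Nonempty := by
      rw [Finset.sdiff_empty]; exact ⟨v0, Finset.mem_univ v0⟩
    exact ⟨_, {v0}, Finset.singleton_nonempty v0, ∅, hZne, by simpa using hk, by simp, rfl⟩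
  have key : ∀ x ∈ Sg, sInf Sl ≤ 2 * x := by
    rintro x ⟨C, hC, Z, hZne, hCk, hZz, rfl⟩
    set r := (Finset.univ \ Z).sup' hZne (fun v => C.inf' hC (fun c => dist v c)) with hr
    have hr0 : 0 ≤ r := by
      obtain ⟨v, hv⟩ := hZne
      exact le_trans (Finset.le_inf' hC _ fun c _ => dist_nonneg)
        (Finset.le_sup' (fun v => C.inf' hC fun c => dist v c) hv)
    -- near centers
    set T : V → Finset V := fun c => (P i).filter (fun w => w ∉ Z ∧ dist w c ≤ r) with hT
    set f : V → V := fun c => if h : (T c).Nonempty then h.choose else hVne.some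
      with hf
    have hfmem : ∀ c, (T c).Nonempty → f c ∈ T c := by
      intro c h
      simp only [hf, dif_pos h]
      exact h.choose_spec
    set C' : Finset V := (P i ∩ Z) ∪ (C.filter fun c => (T c).Nonempty).image f with hC'
    have hsub : C' ⊆ P i := by
      refine Finset.union_subset Finset.inter_subset_left ?_
      intro w hw
      obtain ⟨c, hc, rfl⟩ := Finset.mem_image.mp hw
      exact (Finset.filter_subset _ _) (hfmem c (Finset.mem_filter.mp hc).2)
    -- every non-outlier of P i is near some representative
    have hnear : ∀ v ∈ P i, v ∉ Z → ∃ w ∈ C', dist v w ≤ 2 * r := by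
      intro v hv hvZ
      have hvU : v ∈ Finset.univ \ Z := Finset.mem_sdiff.mpr ⟨Finset.mem_univ v, hvZ⟩
      have h1 : C.inf' hC (fun c => dist v c) ≤ r :=
        Finset.le_sup' (fun v => C.inf' hC fun c => dist v c) hvU
      obtain ⟨c, hcC, hdc⟩ := (Finset.inf'_le_iff hC).mp h1
      have hTc : (T c).Nonempty :=
        ⟨v, Finset.mem_filter.mpr ⟨hv, hvZ, hdc⟩⟩
      have hw : f c ∈ T c := hfmem c hTc
      obtain ⟨hwP, hwZ, hwc⟩ := Finset.mem_filter.mp hw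
      refine ⟨f c, Finset.mem_union_right _
        (Finset.mem_image.mpr ⟨c, Finset.mem_filter.mpr ⟨hcC, hTc⟩, rfl⟩), ?_⟩
      calc dist v (f c) ≤ dist v c + dist c (f c) := dist_triangle _ _ _
        _ ≤ r + r := add_le_add hdc (by rwa [dist_comm])
        _ = 2 * r := by ring
    have hC'ne : C'.Nonempty := by
      obtain ⟨v0, hv0⟩ := hne i
      by_cases hv0Z : v0 ∈ Z
      · exact ⟨v0, Finset.mem_union_left _ (Finset.mem_inter.mpr ⟨hv0, hv0Z⟩)⟩
      · obtain ⟨w, hw, -⟩ := hnear v0 hv0 hv0Z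
        exact ⟨w, hw⟩
    have hcard : C'.card ≤ k + z := by
      calc C'.card ≤ (P i ∩ Z).card + ((C.filter fun c => (T c).Nonempty).image f).card :=
            Finset.card_union_le _ _
        _ ≤ z + k := by
            refine add_le_add ?_ ?_
            · exact le_trans (Finset.card_le_card Finset.inter_subset_right) hZz
            · exact le_trans (Finset.card_image_le) (le_trans (Finset.card_filter_le _ _) hCk)
        _ = k + z := Nat.add_comm _ _
    have hbound : (P i).sup' (hne i) (fun v => C'.inf' hC'ne (fun c => dist v c)) ≤ 2 * r := by
      refine Finset.sup'_le _ _ ?_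
      intro v hv
      by_cases hvZ : v ∈ Z
      · have hvC' : v ∈ C' := Finset.mem_union_left _ (Finset.mem_inter.mpr ⟨hv, hvZ⟩)
        calc C'.inf' hC'ne (fun c => dist v c) ≤ dist v v := Finset.inf'_le _ hvC'
          _ = 0 := dist_self v
          _ ≤ 2 * r := by linarith
      · obtain ⟨w, hw, hdw⟩ := hnear v hv hvZ
        exact le_trans (Finset.inf'_le _ hw) hdw
    have hmem : (P i).sup' (hne i) (fun v => C'.inf' hC'ne (fun c => dist v c)) ∈ Sl :=
      ⟨C', hC'ne, hsub, hcard, rfl⟩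
    exact le_trans (csInf_le hbdd hmem) hbound
  rw [show (2:ℝ) * sInf Sg = sInf Sg * 2 from mul_comm _ _,
    ← div_le_iff₀ (by norm_num : (0:ℝ) < 2)]
  refine le_csInf hSgne fun x hx => ?_
  rw [div_le_iff₀ (by norm_num : (0:ℝ) < 2), mul_comm]
  exact key x hx
end

section
/- Let G = (V, E) be a graph whose vertex set is partitioned into sets X_1, …, X_k (good clusters) and B (bad points), satisfying: (1) for all u, v in the same X_i, (u,v) ∈ E; (2) for u ∈ X_i and v ∈ X_j with i ≠ j, (u,v) ∉ E and u and v have no common neighbor in G. Then the iterative greedy procedure that k times selects the vertex of maximum remaining degree and removes its closed neighborhood produces clusters C(v_1), …, C(v_k) for which there exists a bijection σ: [k] → [k] with ∑_i |X_{σ(i)} ∖ C(v_i)| ≤ 3|B|. -/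
/-!
Each greedy cluster `C i` lies in a closed neighbourhood, so it meets at most one good cluster,
and by maximality of the greedy choice it is at least as large as every good cluster that is
still intact at step `i`. Match each step that hits an intact good cluster with that cluster,
and the other steps with the good clusters that are never hit. A matched intact cluster loses
at most `|C i ∩ B|` points; the points it keeps, `S`, number at most `|B|` in total, and every
other step lies in `B ∪ S`, while its size bounds the untouched cluster matched with it. As the
`C i` are disjoint, the error is at most `|B| + (|B| + |S|) ≤ 3 |B|`.
-/

open Finset Function

section Remaining

variable {V : Type*} [Fintype V] [DecidableEq V] {R C : ℕ → Finset V} {k : ℕ}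

theorem mem_remaining_iff (hR0 : R 0 = univ) (hRstep : ∀ i < k, R (i + 1) = R i \ C i)
    {m : ℕ} (hm : m ≤ k) {x : V} : x ∈ R m ↔ ∀ i < m, x ∉ C i := by
  induction m with
  | zero => simp [hR0]
  | succ m ih => rw [hRstep m hm, mem_sdiff, ih (by omega), Nat.forall_lt_succ_right]

theorem subset_remaining_iff (hR0 : R 0 = univ) (hRstep : ∀ i < k, R (i + 1) = R i \ C i)
    {m : ℕ} (hm : m ≤ k) {S : Finset V} : S ⊆ R m ↔ ∀ i < m, Disjoint (C i) S := by
  simp only [subset_iff, mem_remaining_iff hR0 hRstep hm, disjoint_right]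
  exact ⟨fun h i hi x hx => h hx i hi, fun h x hx i hi => h i hi hx⟩

theorem pairwise_disjoint_steps (hR0 : R 0 = univ) (hRstep : ∀ i < k, R (i + 1) = R i \ C i)
    (hCR : ∀ i < k, C i ⊆ R i) : Pairwise (Disjoint on fun i : Fin k => C i) := by
  intro i j hij
  rcases hij.lt_or_gt with h | h
  · exact (subset_remaining_iff hR0 hRstep j.isLt.le).1 (hCR j j.isLt) i h
  · exact ((subset_remaining_iff hR0 hRstep i.isLt.le).1 (hCR i i.isLt) j h).symm

theorem eq_of_subset_remaining (hR0 : R 0 = univ) (hRstep : ∀ i < k, R (i + 1) = R i \ C i)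
    {i j : ℕ} (hi : i < k) (hj : j < k) {S : Finset V} (hSi : S ⊆ R i) (hSj : S ⊆ R j)
    (hCi : ¬Disjoint (C i) S) (hCj : ¬Disjoint (C j) S) : i = j := by
  by_contra hij
  rcases Nat.lt_or_gt_of_ne hij with h | h
  · exact hCi ((subset_remaining_iff hR0 hRstep hj.le).1 hSj i h)
  · exact hCj ((subset_remaining_iff hR0 hRstep hi.le).1 hSi j h)

theorem exists_subset_remaining_not_disjoint (hR0 : R 0 = univ)
    (hRstep : ∀ i < k, R (i + 1) = R i \ C i) {S : Finset V}
    (h : ∃ i < k, ¬Disjoint (C i) S) : ∃ i < k, S ⊆ R i ∧ ¬Disjoint (C i) S := by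
  classical
  obtain ⟨hlt, hmeet⟩ := Nat.find_spec h
  refine ⟨Nat.find h, hlt, (subset_remaining_iff hR0 hRstep hlt.le).2 fun i hi => ?_, hmeet⟩
  by_contra hne
  exact Nat.find_min h hi ⟨hi.trans hlt, hne⟩

theorem exists_perm_matching_steps (hR0 : R 0 = univ) (hRstep : ∀ i < k, R (i + 1) = R i \ C i)
    (X : Fin k → Finset V)
    (hunique : ∀ i < k, ∀ a b, ¬Disjoint (C i) (X a) → ¬Disjoint (C i) (X b) → a = b) :
    ∃ σ : Equiv.Perm (Fin k), ∃ F : Finset (Fin k), (∀ i, X (σ i) ⊆ R i) ∧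
      (∀ i ∈ F, ¬Disjoint (C i) (X (σ i))) ∧
      ∀ i ∉ F, ∀ j : Fin k, Disjoint (C j) (X (σ i)) := by
  classical
  let fresh : Set (Fin k) := {i | ∃ t, X t ⊆ R i ∧ ¬Disjoint (C i) (X t)}
  let touched : Set (Fin k) := {t | ∃ i : Fin k, ¬Disjoint (C i) (X t)}
  choose! τ hτ using fun i (hi : i ∈ fresh) => hi
  have hbij : Set.BijOn τ fresh touched := by
    refine ⟨fun i hi => ⟨i, (hτ i hi).2⟩, fun i hi j hj hij => ?_, fun t ⟨i, hi⟩ => ?_⟩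
    · exact Fin.ext <| eq_of_subset_remaining hR0 hRstep i.isLt j.isLt (hτ i hi).1
        (hij ▸ (hτ j hj).1) (hτ i hi).2 (hij ▸ (hτ j hj).2)
    · obtain ⟨j, hj, hsub, hmeet⟩ :=
        exists_subset_remaining_not_disjoint hR0 hRstep ⟨i, i.isLt, hi⟩
      have hfresh : (⟨j, hj⟩ : Fin k) ∈ fresh := ⟨t, hsub, hmeet⟩
      exact ⟨⟨j, hj⟩, hfresh, hunique j hj _ _ (hτ _ hfresh).2 hmeet⟩
  let σ := (hbij.equiv τ).extendSubtype
  have hσ : ∀ i ∈ fresh, σ i = τ i := (hbij.equiv τ).extendSubtype_apply_of_mem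
  have huntouched : ∀ i ∉ fresh, ∀ j : Fin k, Disjoint (C j) (X (σ i)) := fun i hi j => by
    by_contra hj
    exact (hbij.equiv τ).extendSubtype_not_mem i hi ⟨j, hj⟩
  refine ⟨σ, fresh.toFinset, fun i => ?_, fun i hi => ?_, fun i hi => ?_⟩
  · by_cases hi : i ∈ fresh
    · exact hσ i hi ▸ (hτ i hi).1
    · exact (subset_remaining_iff hR0 hRstep i.isLt.le).2
        fun j hj => huntouched i hi ⟨j, hj.trans i.isLt⟩
  · rw [Set.mem_toFinset] at hi
    exact hσ i hi ▸ (hτ i hi).2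
  · exact huntouched i (by simpa using hi)

end Remaining

theorem card_inter_le_of_isClique {V : Type*} [Fintype V] [DecidableEq V] {G : SimpleGraph V}
    [DecidableRel G.Adj] {X R : Finset V} {c : ℕ} (hX : G.IsClique (X : Set V))
    (hmax : ∀ u ∈ R, (insert u (G.neighborFinset u) ∩ R).card ≤ c) :
    (X ∩ R).card ≤ c := by
  obtain h | ⟨u, hu⟩ := (X ∩ R).eq_empty_or_nonempty
  · simp [h]
  rw [mem_inter] at hu
  refine (card_le_card fun x hx => ?_).trans (hmax u hu.2)
  rw [mem_inter] at hx ⊢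
  refine ⟨?_, hx.2⟩
  rcases eq_or_ne u x with rfl | hne
  · exact mem_insert_self _ _
  · exact mem_insert_of_mem ((G.mem_neighborFinset _ _).2 (hX hu.1 hx.1 hne))

theorem eq_of_not_disjoint_of_subset_closedNbhd {V ι : Type*} [Fintype V] [DecidableEq V]
    {G : SimpleGraph V} [DecidableRel G.Adj] {X : ι → Finset V}
    (hdisj : ∀ i j, i ≠ j → Disjoint (X i) (X j))
    (hfar : ∀ i j, i ≠ j → ∀ u ∈ X i, ∀ v ∈ X j,
      ¬ G.Adj u v ∧ ∀ w, ¬ (G.Adj u w ∧ G.Adj v w))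
    {w : V} {S : Finset V} (hS : S ⊆ insert w (G.neighborFinset w)) {a b : ι}
    (ha : ¬Disjoint S (X a)) (hb : ¬Disjoint S (X b)) : a = b := by
  by_contra hab
  obtain ⟨x, hxS, hxa⟩ := not_disjoint_iff.1 ha
  obtain ⟨y, hyS, hyb⟩ := not_disjoint_iff.1 hb
  have hxw := hS hxS
  have hyw := hS hyS
  rw [mem_insert, G.mem_neighborFinset] at hxw hyw
  obtain ⟨hxy, hcommon⟩ := hfar a b hab x hxa y hyb
  rcases hxw with rfl | hx <;> rcases hyw with rfl | hy
  · exact disjoint_left.1 (hdisj a b hab) hxa hyb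
  · exact hxy hy
  · exact hxy hx.symm
  · exact hcommon w ⟨hx.symm, hy.symm⟩

theorem card_sdiff_le_card_inter_of_subset_union {V : Type*} [DecidableEq V] {Y C B : Finset V}
    (hcard : Y.card ≤ C.card) (hC : C ⊆ B ∪ Y) : (Y \ C).card ≤ (C ∩ B).card := by
  have hsplit : C.card ≤ (C ∩ B).card + (Y ∩ C).card := calc
    C.card ≤ (C ∩ B ∪ C ∩ Y).card := by
      rw [← inter_union_distrib_left]
      exact card_le_card (subset_inter subset_rfl hC)
    _ ≤ (C ∩ B).card + (Y ∩ C).card := inter_comm C Y ▸ card_union_le _ _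
  have := card_sdiff_add_card_inter Y C
  omega

theorem sum_card_sdiff_le_three_mul {V ι : Type*} [DecidableEq V] [Fintype ι] [DecidableEq ι]
    {C Y : ι → Finset V} {B : Finset V} (F : Finset ι) (hC : Pairwise (Disjoint on C))
    (hF : ∀ i ∈ F, (Y i \ C i).card ≤ (C i ∩ B).card)
    (hcard : ∀ i ∉ F, (Y i).card ≤ (C i).card)
    (hsub : ∀ i ∉ F, C i ⊆ B ∪ F.biUnion fun j => Y j \ C j) :
    ∑ i, (Y i \ C i).card ≤ 3 * B.card := by
  set S := F.biUnion fun j => Y j \ C j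
  have hFB : ∑ i ∈ F, (Y i \ C i).card ≤ B.card := calc
    ∑ i ∈ F, (Y i \ C i).card ≤ ∑ i ∈ F, (C i ∩ B).card := sum_le_sum hF
    _ = (F.biUnion fun i => C i ∩ B).card :=
      (card_biUnion fun i _ j _ hij => (hC hij).mono inter_subset_left inter_subset_left).symm
    _ ≤ B.card := card_le_card (biUnion_subset.2 fun i _ => inter_subset_right)
  have hFc : ∑ i ∈ Fᶜ, (Y i \ C i).card ≤ B.card + S.card := calc
    ∑ i ∈ Fᶜ, (Y i \ C i).card ≤ ∑ i ∈ Fᶜ, (C i).card :=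
      sum_le_sum fun i hi => (card_le_card sdiff_subset).trans (hcard i (mem_compl.1 hi))
    _ = (Fᶜ.biUnion C).card := (card_biUnion fun i _ j _ hij => hC hij).symm
    _ ≤ (B ∪ S).card := card_le_card (biUnion_subset.2 fun i hi => hsub i (mem_compl.1 hi))
    _ ≤ B.card + S.card := card_union_le _ _
  have hS : S.card ≤ B.card := card_biUnion_le.trans hFB
  rw [← sum_add_sum_compl F]
  omega

theorem greedy_clustering_error_bound_general {V : Type*} [Fintype V] [DecidableEq V]
    (G : SimpleGraph V) [DecidableRel G.Adj] (k : ℕ)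
    (X : Fin k → Finset V) (B : Finset V)
    (hdisj : ∀ i j, i ≠ j → Disjoint (X i) (X j))
    (hcover : ∀ v : V, v ∈ B ∨ ∃ i, v ∈ X i)
    (hclique : ∀ i, ∀ u ∈ X i, ∀ v ∈ X i, u ≠ v → G.Adj u v)
    (hfar : ∀ i j, i ≠ j → ∀ u ∈ X i, ∀ v ∈ X j,
      ¬ G.Adj u v ∧ ∀ w, ¬ (G.Adj u w ∧ G.Adj v w))
    (R : ℕ → Finset V) (v : ℕ → V) (C : ℕ → Finset V)
    (hR0 : R 0 = Finset.univ)
    (hC : ∀ i < k, C i = (insert (v i) (G.neighborFinset (v i))) ∩ R i)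
    (hmax : ∀ i < k, ∀ u ∈ R i, ((insert u (G.neighborFinset u)) ∩ R i).card ≤ (C i).card)
    (hRstep : ∀ i < k, R (i + 1) = R i \ C i) :
    ∃ σ : Equiv.Perm (Fin k),
      ∑ i : Fin k, (X (σ i) \ C (i : ℕ)).card ≤ 3 * B.card := by
  have hCdisj := pairwise_disjoint_steps hR0 hRstep fun i hi => hC i hi ▸ inter_subset_right
  have hunique : ∀ i < k, ∀ a b, ¬Disjoint (C i) (X a) → ¬Disjoint (C i) (X b) → a = b :=
    fun i hi _ _ =>
      eq_of_not_disjoint_of_subset_closedNbhd hdisj hfar (hC i hi ▸ inter_subset_left)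
  have hle : ∀ i < k, ∀ t, X t ⊆ R i → (X t).card ≤ (C i).card := fun i hi t ht =>
    inter_eq_left.2 ht ▸
      card_inter_le_of_isClique (fun u hu w hw => hclique t u hu w hw) (hmax i hi)
  obtain ⟨σ, F, hσR, hσF, hσFc⟩ := exists_perm_matching_steps hR0 hRstep X hunique
  refine ⟨σ, sum_card_sdiff_le_three_mul F hCdisj (fun i hi => ?_)
    (fun i _ => hle i i.isLt _ (hσR i)) (fun i hi x hx => ?_)⟩
  · refine card_sdiff_le_card_inter_of_subset_union (hle i i.isLt _ (hσR i)) fun x hx => ?_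
    rcases hcover x with hxB | ⟨t, ht⟩
    · exact mem_union_left _ hxB
    · rw [hunique i i.isLt _ t (hσF i hi) (not_disjoint_iff.2 ⟨x, hx, ht⟩)]
      exact mem_union_right _ ht
  · rcases hcover x with hxB | ⟨t, ht⟩
    · exact mem_union_left _ hxB
    -- the step matched with `t` is in `F` and differs from `i`, so it missed `x`
    have hj : σ.symm t ∈ F := by
      by_contra hj
      exact disjoint_left.1 (σ.apply_symm_apply t ▸ hσFc _ hj i) hx ht
    refine mem_union_right _ (mem_biUnion.2 ⟨σ.symm t, hj, mem_sdiff.2 ⟨?_, ?_⟩⟩)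
    · rwa [σ.apply_symm_apply]
    · exact disjoint_right.1 (hCdisj (ne_of_mem_of_not_mem hj hi)) hx

/-- Iterative greedy clustering guarantee: if `G`'s vertices are partitioned into
cliques `X_1,…,X_k` (good clusters) and bad points `B`, with distinct good clusters
non-adjacent and sharing no common neighbor, then any run of the greedy procedure
(repeatedly pick a vertex of maximum remaining closed-neighborhood size and remove
its closed neighborhood) produces clusters `C 0, …, C (k-1)` such that for some
bijection `σ`, `∑ i |X (σ i) \ C i| ≤ 3|B|`. -/
theorem greedy_clustering_error_bound {V : Type*} [Fintype V] [DecidableEq V]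
    (G : SimpleGraph V) [DecidableRel G.Adj] (k : ℕ)
    (X : Fin k → Finset V) (B : Finset V)
    (hdisj : ∀ i j, i ≠ j → Disjoint (X i) (X j))
    (hdisjB : ∀ i, Disjoint (X i) B)
    (hcover : ∀ v : V, v ∈ B ∨ ∃ i, v ∈ X i)
    (hclique : ∀ i, ∀ u ∈ X i, ∀ v ∈ X i, u ≠ v → G.Adj u v)
    (hfar : ∀ i j, i ≠ j → ∀ u ∈ X i, ∀ v ∈ X j,
      ¬ G.Adj u v ∧ ∀ w, ¬ (G.Adj u w ∧ G.Adj v w))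
    (R : ℕ → Finset V) (v : ℕ → V) (C : ℕ → Finset V)
    (hR0 : R 0 = Finset.univ)
    (hv : ∀ i < k, v i ∈ R i)
    (hC : ∀ i < k, C i = (insert (v i) (G.neighborFinset (v i))) ∩ R i)
    (hmax : ∀ i < k, ∀ u ∈ R i, ((insert u (G.neighborFinset u)) ∩ R i).card ≤ (C i).card)
    (hRstep : ∀ i < k, R (i + 1) = R i \ C i) :
    ∃ σ : Equiv.Perm (Fin k),
      ∑ i : Fin k, (X (σ i) \ C (i : ℕ)).card ≤ 3 * B.card :=
  greedy_clustering_error_bound_general G k X B hdisj hcover hclique hfar R v C hR0 hC hmax hRstep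
end

section
/- Let (V, d) be a metric space with optimal k-median clusters C_1, …, C_k, centers c_1, …, c_k, and a threshold t > 0. Call a point v good if d(v, c_v) < t and d(v, c') > 17t for every optimal center c' ≠ c_v; let H_j be the good points of C_j. Then in the threshold graph G_{2t} (edges between points at distance ≤ 2t): (1) each H_j is a clique, and (2) for j ≠ j', any u ∈ H_j and v ∈ H_{j'} satisfy d(u,v) > 16t, and hence u and v have no common neighbor in G_{2t}. -/
/-- Structure of good points in the threshold graph `G_{2t}`: if a good point `v`
satisfies `d(v,c_v) < t` and `d(v,c') > 17t` for every other optimal center `c'`,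
then good points of the same cluster form a clique in `G_{2t}` (distance ≤ 2t),
and good points of different clusters are at distance > 16t, hence have no common
neighbor in `G_{2t}`. -/
theorem good_points_threshold_structure {V : Type*} [MetricSpace V] [Fintype V] {k : ℕ}
    (c : Fin k → V) (σ : V → Fin k)
    (hσ : ∀ v j, dist v (c (σ v)) ≤ dist v (c j))
    (t : ℝ) (ht : 0 < t)
    (good : V → Prop)
    (hgood : ∀ v, good v ↔
      dist v (c (σ v)) < t ∧ ∀ j, j ≠ σ v → 17 * t < dist v (c j)) :
    (∀ j : Fin k, ∀ u v : V, good u → σ u = j → good v → σ v = j →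
      dist u v ≤ 2 * t) ∧
    (∀ j j' : Fin k, j ≠ j' → ∀ u v : V, good u → σ u = j → good v → σ v = j' →
      16 * t < dist u v ∧ ∀ w : V, ¬ (dist u w ≤ 2 * t ∧ dist w v ≤ 2 * t)) := by
  constructor
  · intro j u v hu huj hv hvj
    have h1 := ((hgood u).1 hu).1
    have h2 := ((hgood v).1 hv).1
    calc dist u v ≤ dist u (c j) + dist v (c j) := dist_triangle_right u v (c j)
      _ ≤ 2 * t := by subst huj; rw [hvj] at h2; linarith
  · intro j j' hjj u v hu huj hv hvj
    have h1 := ((hgood u).1 hu).2 j' (huj ▸ hjj.symm)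
    have h2 := ((hgood v).1 hv).1
    rw [hvj] at h2
    have key : 16 * t < dist u v := by
      have := dist_triangle_right u (c j') v
      have := dist_comm v (c j')
      linarith [dist_triangle u (c j') v, dist_triangle_right u (c j') v]
    refine ⟨key, fun w ⟨hw1, hw2⟩ => ?_⟩
    linarith [dist_triangle u w v]
end

section
/- Let (V, d) be a k-center instance satisfying (2, 0)-approximation stability with optimal radius r*. Then two points u, v ∈ V belong to the same optimal cluster if and only if d(u, v) ≤ 2r*. -/
/-- `X` is a partition of `V` into `k` (possibly empty) clusters. -/
def IsClusterPartition {V : Type*} {k : ℕ} (X : Fin k → Finset V) : Prop :=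
  (∀ i j, i ≠ j → Disjoint (X i) (X j)) ∧ ∀ v : V, ∃ i, v ∈ X i

/-- Under `(2,0)`-approximation stability for k-center with optimal radius `r*`,
two points belong to the same optimal cluster iff their distance is at most `2r*`. -/
theorem kcenter_2stable_same_cluster_iff {V : Type*} [MetricSpace V] [Fintype V] {k : ℕ}
    (C : Fin k → Finset V) (c : Fin k → V) (rstar : ℝ) (hr : 0 ≤ rstar)
    (hpart : IsClusterPartition C)
    (hcost : ∀ i, ∀ v ∈ C i, dist v (c i) ≤ rstar)
    (hstab : ∀ (X : Fin k → Finset V) (x : Fin k → V),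
      IsClusterPartition X → (∀ i, ∀ v ∈ X i, dist v (x i) ≤ 2 * rstar) →
      ∃ π : Equiv.Perm (Fin k), ∀ i, X i = C (π i)) :
    ∀ u v : V, (∃ i, u ∈ C i ∧ v ∈ C i) ↔ dist u v ≤ 2 * rstar := by
  classical
  obtain ⟨hdisj, hcov⟩ := hpart
  intro u v
  constructor
  · rintro ⟨i, hu, hv⟩
    calc dist u v ≤ dist u (c i) + dist (c i) v := dist_triangle _ _ _
      _ ≤ rstar + rstar := add_le_add (hcost i u hu)
            (by rw [dist_comm]; exact hcost i v hv)
      _ = 2 * rstar := by ring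
  · intro hd
    obtain ⟨i, hu⟩ := hcov u
    obtain ⟨j, hv⟩ := hcov v
    by_cases hij : i = j
    · exact ⟨i, hu, hij ▸ hv⟩
    exfalso
    set X : Fin k → Finset V :=
      fun l => if l = i then insert v (C i) else if l = j then (C j).erase v else C l with hX
    have key : ∀ l w, w ∈ X l → (w ∈ C l ∧ ¬(l = i ∧ w = v)) ∨ (l = i ∧ w = v) := by
      intro l w hw
      simp only [hX] at hw
      split_ifs at hw with h1 h2
      · rcases Finset.mem_insert.mp hw with hwv | hwC
        · exact Or.inr ⟨h1, hwv⟩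
        · by_cases hwv : w = v
          · exact Or.inr ⟨h1, hwv⟩
          · exact Or.inl ⟨h1 ▸ hwC, fun h => hwv h.2⟩
      · exact Or.inl ⟨h2 ▸ (Finset.mem_of_mem_erase hw), fun h => h1 h.1⟩
      · exact Or.inl ⟨hw, fun h => h1 h.1⟩
    have hXpart : IsClusterPartition X := by
      constructor
      · intro a b hab
        rw [Finset.disjoint_left]
        intro w hwa hwb
        rcases key a w hwa with ⟨hCa, hna⟩ | ⟨hai, hwv⟩ <;>
          rcases key b w hwb with ⟨hCb, hnb⟩ | ⟨hbi, hwv'⟩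
        · by_cases hab' : a = b
          · exact hab hab'
          · exact (Finset.disjoint_left.mp (hdisj a b hab)) hCa hCb
        · -- w = v ∈ C a, and v ∈ C j, so a = j; but then a = j means a ≠ i fine,
          -- w ∈ X a with a = j means w ∈ erase, contradiction via hna? Use disjointness:
          by_cases haj : a = j
          · -- a = j, w = v, so w ∈ X a = erase v, contradiction
            subst haj
            subst hbi
            simp only [hX, if_neg (Ne.symm hij), if_pos rfl] at hwa
            exact (Finset.ne_of_mem_erase hwa) hwv'
          · exact (Finset.disjoint_left.mp (hdisj a j haj)) (hwv' ▸ hCa) hv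
        · by_cases hbj : b = j
          · subst hbj
            subst hai
            simp only [hX, if_neg (Ne.symm hij), if_pos rfl] at hwb
            exact (Finset.ne_of_mem_erase hwb) hwv
          · exact (Finset.disjoint_left.mp (hdisj b j hbj)) (hwv ▸ hCb) hv
        · exact hab (hai.trans hbi.symm)
      · intro w
        obtain ⟨l, hw⟩ := hcov w
        by_cases hlj : l = j
        · by_cases hwv : w = v
          · exact ⟨i, by simp [hX, hwv]⟩
          · exact ⟨j, by simp [hX, Ne.symm hij, hlj ▸ hw, hwv]⟩
        · by_cases hli : l = i
          · exact ⟨i, by simp [hX, hli ▸ hw]⟩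
          · exact ⟨l, by simp [hX, hli, hlj, hw]⟩
    have hXcost : ∀ l, ∀ w ∈ X l, dist w (Function.update c i u l) ≤ 2 * rstar := by
      intro l w hw
      simp only [hX] at hw
      split_ifs at hw with h1 h2
      · subst h1
        rw [Function.update_self]
        rcases Finset.mem_insert.mp hw with hwv | hwC
        · subst hwv; rw [dist_comm]; exact hd
        · calc dist w u ≤ dist w (c l) + dist (c l) u := dist_triangle _ _ _
            _ ≤ rstar + rstar := add_le_add (hcost l w hwC)
                (by rw [dist_comm]; exact hcost l u hu)
            _ = 2 * rstar := by ring
      · rw [Function.update_of_ne h1]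
        calc dist w (c l) ≤ rstar := hcost l w (h2 ▸ Finset.mem_of_mem_erase hw)
          _ ≤ 2 * rstar := by linarith
      · rw [Function.update_of_ne h1]
        calc dist w (c l) ≤ rstar := hcost l w hw
          _ ≤ 2 * rstar := by linarith
    obtain ⟨π, hπ⟩ := hstab X (Function.update c i u) hXpart hXcost
    have hvXi : v ∈ X i := by simp [hX]
    have hvCπ : v ∈ C (π i) := hπ i ▸ hvXi
    have hπij : π i = j := by
      by_contra h
      exact (Finset.disjoint_left.mp (hdisj (π i) j h)) hvCπ hv
    have huXi : u ∈ X i := by simp [hX, hu]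
    have huCj : u ∈ C j := hπij ▸ (hπ i ▸ huXi)
    exact (Finset.disjoint_left.mp (hdisj i j hij)) hu huCj
end

section
/- Under the hypotheses of the previous statement, the following algorithm outputs a set X of exactly k points, one from each optimal cluster, and using each x ∈ X as center for its cluster gives a clustering of cost at most 2r*: form the graph on V with edges between pairs at distance ≤ 2r*, and pick one point from each connected component. Moreover, by (2,0)-approximation stability, this clustering equals the optimal clustering. -/
/-- Under `(2,0)`-approximation stability for k-center with optimal radius `r*`:
the connected components of the threshold graph (edges between pairs at distance
≤ 2r*) are exactly the optimal clusters `C_1,…,C_k` (so picking one point per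
component yields exactly `k` points, one per optimal cluster), and any choice of
one representative per component, used as centers, clusters every point within
distance `2r*` of its representative — i.e. the resulting clustering is the
optimal clustering with cost at most `2r*`. -/
theorem kcenter_2stable_threshold_components {V : Type*} [MetricSpace V] [Fintype V] {k : ℕ}
    (C : Fin k → Finset V) (c : Fin k → V) (rstar : ℝ) (hr : 0 ≤ rstar)
    (hpart : IsClusterPartition C)
    (hne : ∀ i, (C i).Nonempty)
    (hcost : ∀ i, ∀ v ∈ C i, dist v (c i) ≤ rstar)
    (hstab : ∀ (X : Fin k → Finset V) (x : Fin k → V),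
      IsClusterPartition X → (∀ i, ∀ v ∈ X i, dist v (x i) ≤ 2 * rstar) →
      ∃ π : Equiv.Perm (Fin k), ∀ i, X i = C (π i)) :
    (∃ e : (SimpleGraph.fromRel fun u v : V => dist u v ≤ 2 * rstar).ConnectedComponent ≃ Fin k,
      ∀ comp, ∀ v : V,
        (SimpleGraph.fromRel fun u v : V => dist u v ≤ 2 * rstar).connectedComponentMk v = comp ↔
          v ∈ C (e comp)) ∧
    (∀ rep : (SimpleGraph.fromRel fun u v : V => dist u v ≤ 2 * rstar).ConnectedComponent → V,
      (∀ comp, (SimpleGraph.fromRel fun u v : V => dist u v ≤ 2 * rstar).connectedComponentMk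
          (rep comp) = comp) →
      ∀ v : V, dist v (rep ((SimpleGraph.fromRel fun u v : V =>
        dist u v ≤ 2 * rstar).connectedComponentMk v)) ≤ 2 * rstar) := by
  classical
  set G := SimpleGraph.fromRel fun u v : V => dist u v ≤ 2 * rstar with hG
  have hmemidx : ∀ v : V, ∃ i, v ∈ C i := hpart.2
  set idx : V → Fin k := fun v => (hmemidx v).choose with hidx
  have hmem : ∀ v : V, v ∈ C (idx v) := fun v => (hmemidx v).choose_spec
  have huniq : ∀ v i, v ∈ C i → idx v = i := by
    intro v i hv
    by_contra h
    exact (hpart.1 _ _ h).forall_ne_finset (hmem v) hv rfl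
  -- key: points at distance ≤ 2r* lie in the same cluster
  have key : ∀ u v : V, dist u v ≤ 2 * rstar → idx u = idx v := by
    intro u v hd
    by_contra hij
    set i := idx u with hi
    set j := idx v with hj
    have hvi : v ∉ C i := fun hv => hij ((huniq v i hv).symm ▸ rfl)
    set X : Fin k → Finset V := fun l =>
      if l = i then insert v (C i) else if l = j then (C j).erase v else C l with hX
    set x : Fin k → V := fun l => if l = i then u else c l with hx
    have hXdef : ∀ l, X l =
        if l = i then insert v (C i) else if l = j then (C j).erase v else C l := fun _ => rfl
    have hxdef : ∀ l, x l = if l = i then u else c l := fun _ => rfl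
    have hmemX : ∀ l w, w ∈ X l → (l = i ∧ (w = v ∨ w ∈ C i)) ∨ (l ≠ i ∧ w ∈ C l ∧ w ≠ v) := by
      intro l w hw
      rw [hXdef] at hw
      by_cases hl : l = i
      · rw [if_pos hl] at hw
        exact Or.inl ⟨hl, Finset.mem_insert.1 hw⟩
      · rw [if_neg hl] at hw
        refine Or.inr ⟨hl, ?_⟩
        by_cases hlj : l = j
        · rw [if_pos hlj] at hw
          subst hlj
          exact ⟨Finset.mem_of_mem_erase hw, (Finset.mem_erase.1 hw).1⟩
        · rw [if_neg hlj] at hw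
          refine ⟨hw, ?_⟩
          rintro rfl
          exact hlj (huniq w l hw ▸ hj)
    have hXpart : IsClusterPartition X := by
      constructor
      · intro a b hab
        rw [Finset.disjoint_left]
        intro w hwa hwb
        rcases hmemX a w hwa with ⟨ha, hwa'⟩ | ⟨ha, hwa', hwv⟩ <;>
          rcases hmemX b w hwb with ⟨hb, hwb'⟩ | ⟨hb, hwb', hwv'⟩
        · exact hab (ha.trans hb.symm)
        · rcases hwa' with rfl | hwa'
          · exact hwv' rfl
          · exact hb ((huniq w b hwb').symm.trans (huniq w i hwa'))
        · rcases hwb' with rfl | hwb'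
          · exact hwv rfl
          · exact ha ((huniq w a hwa').symm.trans (huniq w i hwb'))
        · exact hab ((huniq w a hwa').symm.trans (huniq w b hwb'))
      · intro w
        by_cases hwv : w = v
        · refine ⟨i, ?_⟩
          rw [hXdef, if_pos rfl]
          exact hwv ▸ Finset.mem_insert_self _ _
        · refine ⟨idx w, ?_⟩
          rw [hXdef]
          by_cases h1 : idx w = i
          · rw [if_pos h1]
            exact Finset.mem_insert_of_mem (h1 ▸ hmem w)
          · rw [if_neg h1]
            by_cases h2 : idx w = j
            · rw [if_pos h2]
              exact Finset.mem_erase.2 ⟨hwv, h2 ▸ hmem w⟩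
            · rw [if_neg h2]
              exact hmem w
    have hXcost : ∀ l, ∀ w ∈ X l, dist w (x l) ≤ 2 * rstar := by
      intro l w hw
      rcases hmemX l w hw with ⟨hl, hwv | hwc⟩ | ⟨hl, hwc, _⟩
      · rw [hxdef, if_pos hl, hwv, dist_comm]
        exact hd
      · rw [hxdef, if_pos hl]
        calc dist w u ≤ dist w (c i) + dist (c i) u := dist_triangle _ _ _
          _ ≤ rstar + rstar := add_le_add (hcost i w hwc)
              (by rw [dist_comm]; exact hcost i u (hi ▸ hmem u))
          _ = 2 * rstar := by ring
      · rw [hxdef, if_neg hl]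
        calc dist w (c l) ≤ rstar := hcost l w hwc
          _ ≤ 2 * rstar := by linarith
    obtain ⟨π, hπ⟩ := hstab X x hXpart hXcost
    have hπi : π i = i := by
      by_contra hne'
      have hsub : C i ⊆ C (π i) := by
        rw [← hπ i, hXdef, if_pos rfl]
        exact Finset.subset_insert _ _
      obtain ⟨w, hw⟩ := hne i
      exact (hpart.1 i (π i) (fun h => hne' h.symm)).forall_ne_finset hw (hsub hw) rfl
    have hvCi : v ∈ C i := by
      have h := hπ i
      rw [hπi, hXdef, if_pos rfl] at h
      rw [← h]
      exact Finset.mem_insert_self _ _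
    exact hvi hvCi
  -- adjacency respects idx
  have hadj : ∀ u v : V, G.Adj u v → idx u = idx v := by
    intro u v huv
    rw [hG, SimpleGraph.fromRel_adj] at huv
    rcases huv.2 with h | h
    · exact key u v h
    · exact (key v u h).symm
  -- same cluster implies reachable
  have hreach : ∀ u v : V, idx u = idx v → G.Reachable u v := by
    intro u v h
    by_cases huv : u = v
    · exact huv ▸ SimpleGraph.Reachable.refl u
    · apply SimpleGraph.Adj.reachable
      rw [hG, SimpleGraph.fromRel_adj]
      refine ⟨huv, Or.inl ?_⟩
      calc dist u v ≤ dist u (c (idx u)) + dist (c (idx u)) v := dist_triangle _ _ _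
        _ ≤ rstar + rstar := add_le_add (hcost _ u (hmem u))
            (by rw [dist_comm]; exact h ▸ hcost _ v (h ▸ hmem v))
        _ = 2 * rstar := by ring
  have hwalk : ∀ u v : V, ∀ _ : G.Walk u v, idx u = idx v := by
    intro u v p
    induction p with
    | nil => rfl
    | cons h _ ih => exact (hadj _ _ h).trans ih
  set f : G.ConnectedComponent → Fin k :=
    SimpleGraph.ConnectedComponent.lift idx (fun u v p _ => hwalk u v p) with hf
  have hfmk : ∀ v : V, f (G.connectedComponentMk v) = idx v := fun v => rfl
  have hbij : Function.Bijective f := by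
    constructor
    · intro c1 c2 h
      obtain ⟨u, rfl⟩ := c1.exists_rep
      obtain ⟨v, rfl⟩ := c2.exists_rep
      exact SimpleGraph.ConnectedComponent.sound (hreach u v h)
    · intro i
      obtain ⟨v, hv⟩ := hne i
      exact ⟨G.connectedComponentMk v, (hfmk v).trans (huniq v i hv)⟩
  refine ⟨⟨Equiv.ofBijective f hbij, ?_⟩, ?_⟩
  · intro comp v
    constructor
    · intro h
      rw [← h]
      exact hmem v
    · intro hv
      obtain ⟨w, rfl⟩ := comp.exists_rep
      exact SimpleGraph.ConnectedComponent.sound (hreach v w (huniq v _ hv))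
  · intro rep hrep v
    have h := hrep (G.connectedComponentMk v)
    have hsame : idx (rep (G.connectedComponentMk v)) = idx v := congrArg f h
    calc dist v (rep (G.connectedComponentMk v))
        ≤ dist v (c (idx v)) + dist (c (idx v)) (rep (G.connectedComponentMk v)) :=
          dist_triangle _ _ _
      _ ≤ rstar + rstar := add_le_add (hcost _ v (hmem v))
          (by rw [dist_comm]; exact hsame ▸ hcost _ _ (hmem _))
      _ = 2 * rstar := by ring
end

section
/- Let (V, d) be a finite metric space, let Z' ⊆ V with |Z'| ≤ z be the outliers of the optimal (k, z)-clustering with centers c_1, …, c_k, and let A ⊆ V be any set of points containing, for each v ∈ V, some designated nearest point a_v ∈ A (a_v = argmin_{a∈A} d(v,a)). For each optimal center c_j, let c_j' be the nearest point of A to c_j. Then for the ℓ_p objective (p ≥ 1): ∑_{v ∈ V∖Z'} d(a_v, c'_v)^p ≤ 2^{2p−1} · ( ∑_{v ∈ V∖Z'} d(v, a_v)^p + ∑_{v ∈ V∖Z'} d(v, c_v)^p ), where c_v is the optimal center of v and c'_v its nearest A-point. -/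
/-!
With `b` a nearest point of `A` to `c` and `a ∈ A`, we have `d(c, b) ≤ d(c, a)`, so
`d(a, b) ≤ 2 d(a, c) ≤ 2 (d(v, a) + d(v, c))` for every point `v`. Raising to the power `p ≥ 1`
and using the convexity bound `(x + y)^p ≤ 2^(p-1) (x^p + y^p)` gives the pointwise estimate
`d(a, b)^p ≤ 2^p · 2^(p-1) (d(v, a)^p + d(v, c)^p)`; summing over the non-outliers proves the claim.
-/

lemma Real.add_rpow_le_two_rpow_mul_rpow_add_rpow {p x y : ℝ} (hx : 0 ≤ x) (hy : 0 ≤ y)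
    (hp : 1 ≤ p) : (x + y) ^ p ≤ 2 ^ (p - 1) * (x ^ p + y ^ p) := by
  lift x to NNReal using hx
  lift y to NNReal using hy
  exact_mod_cast NNReal.rpow_add_le_mul_rpow_add_rpow x y hp

section PseudoMetricSpace

variable {X : Type*} [PseudoMetricSpace X]

lemma dist_le_two_mul_dist_of_dist_le {a b c : X} (h : dist c b ≤ dist c a) :
    dist a b ≤ 2 * dist a c :=
  calc dist a b ≤ dist a c + dist c b := dist_triangle a c b
    _ ≤ dist a c + dist c a := by gcongr
    _ = 2 * dist a c := by rw [dist_comm c a, two_mul]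

lemma dist_rpow_le_of_dist_le {a b c : X} (v : X) (h : dist c b ≤ dist c a)
    {p : ℝ} (hp : 1 ≤ p) :
    dist a b ^ p ≤ 2 ^ (2 * p - 1) * (dist v a ^ p + dist v c ^ p) := by
  have hp₀ : 0 ≤ p := zero_le_one.trans hp
  have hac : dist a c ≤ dist v a + dist v c := dist_triangle_left a c v
  calc dist a b ^ p ≤ (2 * (dist v a + dist v c)) ^ p := by
        gcongr
        exact (dist_le_two_mul_dist_of_dist_le h).trans (by gcongr)
    _ = 2 ^ p * (dist v a + dist v c) ^ p := Real.mul_rpow zero_le_two (by positivity)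
    _ ≤ 2 ^ p * (2 ^ (p - 1) * (dist v a ^ p + dist v c ^ p)) := by
        gcongr
        exact Real.add_rpow_le_two_rpow_mul_rpow_add_rpow dist_nonneg dist_nonneg hp
    _ = 2 ^ (2 * p - 1) * (dist v a ^ p + dist v c ^ p) := by
        rw [← mul_assoc, ← Real.rpow_add zero_lt_two]
        ring_nf

end PseudoMetricSpace

theorem triangle_chain_bound_general {V : Type*} [MetricSpace V] [Fintype V] [DecidableEq V] {k : ℕ}
    (Z' : Finset V)
    (A : Finset V) (a : V → V) (haA : ∀ v, a v ∈ A)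
    (c : Fin k → V) (σ : V → Fin k)
    (c' : Fin k → V)
    (hc'near : ∀ j, ∀ b ∈ A, dist (c j) (c' j) ≤ dist (c j) b)
    (p : ℝ) (hp : 1 ≤ p) :
    ∑ v ∈ Finset.univ \ Z', dist (a v) (c' (σ v)) ^ p ≤
      (2 : ℝ) ^ (2 * p - 1) *
        (∑ v ∈ Finset.univ \ Z', dist v (a v) ^ p +
          ∑ v ∈ Finset.univ \ Z', dist v (c (σ v)) ^ p) := by
  rw [← Finset.sum_add_distrib, Finset.mul_sum]
  exact Finset.sum_le_sum fun v _ ↦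
    dist_rpow_le_of_dist_le v (hc'near (σ v) (a v) (haA v)) hp

/-- Core chain-of-triangle-inequalities step of the distributed clustering analysis:
with `a_v` the nearest point of `A` to `v`, `c_v` the optimal center of `v`, and
`c'_v` the nearest point of `A` to `c_v`, summing over non-outliers:
`∑ d(a_v, c'_v)^p ≤ 2^{2p−1} (∑ d(v,a_v)^p + ∑ d(v,c_v)^p)`. -/
theorem triangle_chain_bound {V : Type*} [MetricSpace V] [Fintype V] [DecidableEq V] {k z : ℕ}
    (Z' : Finset V) (hZ : Z'.card ≤ z)
    (A : Finset V) (a : V → V) (haA : ∀ v, a v ∈ A)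
    (hanear : ∀ v, ∀ b ∈ A, dist v (a v) ≤ dist v b)
    (c : Fin k → V) (σ : V → Fin k)
    (hσ : ∀ v j, dist v (c (σ v)) ≤ dist v (c j))
    (c' : Fin k → V) (hc' : ∀ j, c' j ∈ A)
    (hc'near : ∀ j, ∀ b ∈ A, dist (c j) (c' j) ≤ dist (c j) b)
    (p : ℝ) (hp : 1 ≤ p) :
    ∑ v ∈ Finset.univ \ Z', dist (a v) (c' (σ v)) ^ p ≤
      (2 : ℝ) ^ (2 * p - 1) *
        (∑ v ∈ Finset.univ \ Z', dist v (a v) ^ p +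
          ∑ v ∈ Finset.univ \ Z', dist v (c (σ v)) ^ p) :=
  triangle_chain_bound_general Z' A a haA c σ c' hc'near p hp
end

section
/- In a metric space, for one point set S ⊆ V with optimal centers c_1, …, c_k ∈ V (assigning each v ∈ S to its closest center c_v), replace each c_j by its nearest point c_j' ∈ S. Then the clustering of S using centers {c_1', …, c_k'} has ℓ_p cost at most 2 times the cost with centers {c_1, …, c_k}; that is, (∑_{v∈S} d(v, c'_v)^p)^{1/p} ≤ 2·(∑_{v∈S} d(v, c_v)^p)^{1/p}, where c'_v is the nearest replaced center. -/
open Finset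

/-- Replacing each optimal center `c_j` by its nearest point `c'_j ∈ S` increases
the ℓ_p clustering cost of `S` by at most a factor `2`:
`(∑_{v∈S} d(v, c'_v)^p)^{1/p} ≤ 2 (∑_{v∈S} d(v, c_v)^p)^{1/p}`. -/
theorem replaced_centers_cost_le {V : Type*} [MetricSpace V] [Fintype V] {k : ℕ}
    (S : Finset V) (hS : S.Nonempty)
    (c : Fin k → V) (σ : V → Fin k)
    (hσ : ∀ v ∈ S, ∀ j, dist v (c (σ v)) ≤ dist v (c j))
    (c' : Fin k → V) (hc'S : ∀ j, c' j ∈ S)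
    (hc'near : ∀ j, ∀ b ∈ S, dist (c j) (c' j) ≤ dist (c j) b)
    (σ' : V → Fin k)
    (hσ' : ∀ v ∈ S, ∀ j, dist v (c' (σ' v)) ≤ dist v (c' j))
    (p : ℝ) (hp : 1 ≤ p) :
    (∑ v ∈ S, dist v (c' (σ' v)) ^ p) ^ (1 / p) ≤
      2 * (∑ v ∈ S, dist v (c (σ v)) ^ p) ^ (1 / p) := by
  have hp0 : p ≠ 0 := by linarith
  have hpt : ∀ v ∈ S, dist v (c' (σ' v)) ≤ 2 * dist v (c (σ v)) := by
    intro v hv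
    calc dist v (c' (σ' v)) ≤ dist v (c' (σ v)) := hσ' v hv (σ v)
      _ ≤ dist v (c (σ v)) + dist (c (σ v)) (c' (σ v)) := dist_triangle _ _ _
      _ ≤ dist v (c (σ v)) + dist (c (σ v)) v := by
          gcongr; exact hc'near (σ v) v hv
      _ = 2 * dist v (c (σ v)) := by rw [dist_comm (c (σ v)) v]; ring
  have hsum : (∑ v ∈ S, dist v (c' (σ' v)) ^ p) ≤
      (2 : ℝ) ^ p * ∑ v ∈ S, dist v (c (σ v)) ^ p := by
    rw [Finset.mul_sum]
    refine Finset.sum_le_sum fun v hv => ?_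
    calc dist v (c' (σ' v)) ^ p ≤ (2 * dist v (c (σ v))) ^ p :=
          Real.rpow_le_rpow dist_nonneg (hpt v hv) (by linarith)
      _ = (2 : ℝ) ^ p * dist v (c (σ v)) ^ p :=
          Real.mul_rpow (by norm_num) dist_nonneg
  have h1 : (0 : ℝ) ≤ ∑ v ∈ S, dist v (c' (σ' v)) ^ p :=
    Finset.sum_nonneg fun v _ => Real.rpow_nonneg dist_nonneg _
  have h2 : (0 : ℝ) ≤ ∑ v ∈ S, dist v (c (σ v)) ^ p :=
    Finset.sum_nonneg fun v _ => Real.rpow_nonneg dist_nonneg _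
  calc (∑ v ∈ S, dist v (c' (σ' v)) ^ p) ^ (1 / p)
      ≤ ((2 : ℝ) ^ p * ∑ v ∈ S, dist v (c (σ v)) ^ p) ^ (1 / p) :=
        Real.rpow_le_rpow h1 hsum (by positivity)
    _ = ((2 : ℝ) ^ p) ^ (1 / p) * (∑ v ∈ S, dist v (c (σ v)) ^ p) ^ (1 / p) :=
        Real.mul_rpow (by positivity) h2
    _ = 2 * (∑ v ∈ S, dist v (c (σ v)) ^ p) ^ (1 / p) := by
        rw [← Real.rpow_mul (by norm_num), mul_one_div, div_self hp0, Real.rpow_one]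
end
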